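/- For every d ∈ ℂ and every n ∈ ℕ there exists a unique polynomial g ∈ ℂ[x], and it has degree exactly n, such that for all t ∈ ℂ: (t(t+d))^{n+1} − ((t−1)(t−1+d))^{n+1} = (2t−1+d) · g(t(t+d−1)). (Property (3.4) of the Racah sinusoidal coordinate: the difference quotient (η_d(t)^{n+1} − η_d(t−1)^{n+1})/(η_d(t) − η_d(t−1)) is a polynomial of degree n in η_{d−1}(t).) -/

import Mathlib

open Polynomial

noncomputable def racahG (d : ℂ) : ℕ → Polynomial ℂ
  | 0 => 1
  | 1 => C 2 * X + C (1 - d)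
  | (n+2) => (C 2 * X + C (1 - d)) * racahG d (n+1)
      - (X ^ 2 - C d * X) * racahG d n

lemma racahG_eval (d : ℂ) : ∀ n (t : ℂ),
    (t * (t + d)) ^ (n + 1) - ((t - 1) * (t - 1 + d)) ^ (n + 1)
      = (2 * t - 1 + d) * (racahG d n).eval (t * (t + d - 1))
  | 0, t => by simp [racahG]; ring
  | 1, t => by simp [racahG]; ring
  | (n+2), t => by
      have h1 := racahG_eval d (n+1) t
      have h0 := racahG_eval d n t
      simp only [racahG, eval_sub, eval_mul, eval_add, eval_C, eval_X, eval_pow] at *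
      linear_combination (2 * (t * (t + d - 1)) + 1 - d) * h1
        - ((t * (t + d - 1)) ^ 2 - d * (t * (t + d - 1))) * h0

lemma racahG_degree_le (d : ℂ) : ∀ n, (racahG d n).degree ≤ n
  | 0 => by simp [racahG]
  | 1 => by
      show (C 2 * X + C (1 - d) : ℂ[X]).degree ≤ ((1:ℕ) : WithBot ℕ)
      exact_mod_cast degree_linear_le
  | (n+2) => by
      have h1 := racahG_degree_le d (n+1)
      have h0 := racahG_degree_le d n
      have hs : (C 2 * X + C (1 - d) : ℂ[X]).degree ≤ ((1:ℕ) : WithBot ℕ) := by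
        exact_mod_cast degree_linear_le
      have hX : (C d * X : ℂ[X]).degree ≤ ((1:ℕ) : WithBot ℕ) := by
        refine (degree_mul_le _ _).trans ?_
        refine le_trans (add_le_add degree_C_le degree_X_le) ?_
        norm_num
      have hp : (X ^ 2 - C d * X : ℂ[X]).degree ≤ ((2:ℕ) : WithBot ℕ) := by
        refine (degree_sub_le _ _).trans (max_le ?_ (hX.trans ?_))
        · exact_mod_cast degree_X_pow_le 2
        · exact_mod_cast (by omega : (1:ℕ) ≤ 2)
      refine (degree_sub_le _ _).trans (max_le ?_ ?_)
      · refine (degree_mul_le _ _).trans ?_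
        refine (add_le_add hs h1).trans ?_
        rw [← Nat.cast_add]
        exact_mod_cast (by omega : 1 + (n+1) ≤ n+2)
      · refine (degree_mul_le _ _).trans ?_
        refine (add_le_add hp h0).trans ?_
        rw [← Nat.cast_add]
        exact_mod_cast (by omega : 2 + n ≤ n+2)

lemma racahG_coeff (d : ℂ) : ∀ n, (racahG d n).coeff n = (n : ℂ) + 1
  | 0 => by simp [racahG]
  | 1 => by
      show (C 2 * X + C (1 - d) : ℂ[X]).coeff 1 = _
      simp [coeff_add, coeff_C_mul, coeff_X_one, coeff_C, coeff_one]
      norm_num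
  | (n+2) => by
      have h1 := racahG_coeff d (n+1)
      have h0 := racahG_coeff d n
      have hd1 : (racahG d (n+1)).coeff (n+2) = 0 :=
        coeff_eq_zero_of_degree_lt (lt_of_le_of_lt (racahG_degree_le d (n+1))
          (by exact_mod_cast (by omega : n+1 < n+2)))
      have hd0 : (racahG d n).coeff (n+1) = 0 :=
        coeff_eq_zero_of_degree_lt (lt_of_le_of_lt (racahG_degree_le d n)
          (by exact_mod_cast (by omega : n < n+1)))
      have eX1 : ((X : ℂ[X]) * racahG d (n+1)).coeff (n+2)
          = (racahG d (n+1)).coeff (n+1) := coeff_X_mul (racahG d (n+1)) (n+1)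
      have eX0 : ((X : ℂ[X]) * racahG d n).coeff (n+2)
          = (racahG d n).coeff (n+1) := coeff_X_mul (racahG d n) (n+1)
      have eP : ((X : ℂ[X]) ^ 2 * racahG d n).coeff (n+2) = (racahG d n).coeff n :=
        coeff_X_pow_mul (racahG d n) 2 n
      show ((C 2 * X + C (1 - d)) * racahG d (n+1)
          - (X ^ 2 - C d * X) * racahG d n).coeff (n+2) = _
      simp only [coeff_sub, add_mul, sub_mul, coeff_add, mul_assoc, coeff_C_mul]
      rw [eX1, eX0, eP, h1, h0, hd1, hd0]
      push_cast
      ring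

lemma racahG_degree (d : ℂ) (n : ℕ) : (racahG d n).degree = n := by
  refine le_antisymm (racahG_degree_le d n) (le_degree_of_ne_zero ?_)
  rw [racahG_coeff d n]
  exact_mod_cast Nat.cast_add_one_ne_zero (R := ℂ) n

theorem racah_power_difference_quotient (d : ℂ) (n : ℕ) :
    ∃ g : Polynomial ℂ,
      (∀ t : ℂ, (t * (t + d)) ^ (n + 1) - ((t - 1) * (t - 1 + d)) ^ (n + 1)
          = (2 * t - 1 + d) * g.eval (t * (t + d - 1)))
      ∧ g.degree = n
      ∧ ∀ g' : Polynomial ℂ,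
          (∀ t : ℂ, (t * (t + d)) ^ (n + 1) - ((t - 1) * (t - 1 + d)) ^ (n + 1)
            = (2 * t - 1 + d) * g'.eval (t * (t + d - 1))) → g' = g := by
  refine ⟨racahG d n, racahG_eval d n, racahG_degree d n, ?_⟩
  intro g' hg'
  apply Polynomial.eq_of_infinite_eval_eq
  set C0 : ℝ := ‖d‖ + 1 with hC0
  have key : ∀ r : ℝ, r ∈ Set.Ioi C0 →
      ((r:ℂ) * ((r:ℂ) + d - 1)) ∈ {x | g'.eval x = (racahG d n).eval x} := by
    intro r hr
    have hrC : ‖d‖ + 1 < r := hr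
    have habs : |d.re| ≤ ‖d‖ := Complex.abs_re_le_norm d
    have hne : (2 * (r:ℂ) - 1 + d) ≠ 0 := by
      intro h
      have hre : (2 * (r:ℂ) - 1 + d).re = 0 := by rw [h]; simp
      simp [Complex.add_re, Complex.sub_re, Complex.mul_re] at hre
      nlinarith [abs_le.mp habs, norm_nonneg d]
    have h1 := hg' (r : ℂ)
    have h2 := racahG_eval d n (r : ℂ)
    exact mul_left_cancel₀ hne (h1.symm.trans h2)
  have hinj : Set.InjOn (fun r : ℝ => (r:ℂ) * ((r:ℂ) + d - 1)) (Set.Ioi C0) := by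
    intro r1 h1 r2 h2 h
    simp only at h
    have habs : |d.re| ≤ ‖d‖ := Complex.abs_re_le_norm d
    have hfac : ((r1:ℂ) - r2) * ((r1:ℂ) + r2 + d - 1) = 0 := by linear_combination h
    have hne : ((r1:ℂ) + r2 + d - 1) ≠ 0 := by
      intro hz
      have hre : ((r1:ℂ) + r2 + d - 1).re = 0 := by rw [hz]; simp
      simp [Complex.add_re, Complex.sub_re] at hre
      have h1' : ‖d‖ + 1 < r1 := h1
      have h2' : ‖d‖ + 1 < r2 := h2
      nlinarith [abs_le.mp habs, norm_nonneg d]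
    have hz : (r1:ℂ) - r2 = 0 := by
      rcases mul_eq_zero.mp hfac with h' | h'
      · exact h'
      · exact absurd h' hne
    exact_mod_cast sub_eq_zero.mp hz
  have himg : ((fun r : ℝ => (r:ℂ) * ((r:ℂ) + d - 1)) '' Set.Ioi C0).Infinite :=
    (Set.Ioi_infinite C0).image hinj
  refine himg.mono ?_
  rintro _ ⟨r, hr, rfl⟩
  exact key r hr
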